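/- Let N be a positive integer and μ, ε > 0 real. Let D₁, D₂, D₃ be pairwise commuting skew-symmetric real N×N matrices, 𝔻 := [[0, −D₃, D₂], [D₃, 0, −D₁], [−D₂, D₁, 0]] (3N×3N), 𝒟 := (1/√(με))·[[0, −𝔻], [𝔻, 0]] (6N×6N), and for k = 1, 2, 3 let B_k be the block-diagonal 3N×3N matrix with each diagonal block equal to D_k. Given H⁰, E⁰ ∈ ℝ^(3N), define (√μ·H^t, √ε·E^t) = exp(t𝒟)·(√μ·H⁰, √ε·E⁰) and set Ḣ^t := −(1/μ)·𝔻·E^t, Ė^t := (1/ε)·𝔻·H^t. Then for each k = 1, 2, 3 and all t ∈ ℝ: μ·⟨H^t, B_k H^t⟩ + ε·⟨E^t, B_k E^t⟩ = μ·⟨H⁰, B_k H⁰⟩ + ε·⟨E⁰, B_k E⁰⟩, and μ·⟨Ḣ^t, B_k Ḣ^t⟩ + ε·⟨Ė^t, B_k Ė^t⟩ = μ·⟨Ḣ⁰, B_k Ḣ⁰⟩ + ε·⟨Ė⁰, B_k Ė⁰⟩. -/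

import Mathlib

open Matrix

/-- A `3N × 3N` block matrix built from a `3 × 3` array of `N × N` blocks. -/
def blockMat3 {N : ℕ} {α : Type*} (A : Fin 3 → Fin 3 → Matrix (Fin N) (Fin N) α) :
    Matrix (Fin 3 × Fin N) (Fin 3 × Fin N) α :=
  Matrix.of fun p q => A p.1 q.1 p.2 q.2

/-- The `3N × 3N` block-diagonal matrix with each diagonal block equal to `D`. -/
def blockDiag3 {N : ℕ} {α : Type*} [Zero α] (D : Matrix (Fin N) (Fin N) α) :
    Matrix (Fin 3 × Fin N) (Fin 3 × Fin N) α :=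
  Matrix.of fun p q => if p.1 = q.1 then D p.2 q.2 else 0

section helpers
variable {n : Type*} [Fintype n] [DecidableEq n]

lemma aux_mulVec_dot_mulVec (A M : Matrix n n ℝ) (x y : n → ℝ) :
    (A *ᵥ x) ⬝ᵥ (M *ᵥ y) = x ⬝ᵥ ((Aᵀ * M) *ᵥ y) := by
  have h : x ⬝ᵥ ((Aᵀ * M) *ᵥ y) = (x ᵥ* Aᵀ) ⬝ᵥ (M *ᵥ y) := by
    rw [← Matrix.mulVec_mulVec, Matrix.dotProduct_mulVec]
  rw [h, Matrix.vecMul_transpose]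

lemma aux_exp_conserve (D P : Matrix n n ℝ) (hD : Dᵀ = -D) (hC : Commute P D)
    (x : n → ℝ) :
    ((NormedSpace.exp D) *ᵥ x) ⬝ᵥ (P *ᵥ ((NormedSpace.exp D) *ᵥ x))
      = x ⬝ᵥ (P *ᵥ x) := by
  have h1 : (NormedSpace.exp D)ᵀ = NormedSpace.exp (-D) := by
    rw [← hD, Matrix.exp_transpose]
  have hcomm : Commute (NormedSpace.exp (-D)) P :=
    (hC.symm.neg_left).exp_left
  have hinv : NormedSpace.exp (-D) * NormedSpace.exp D = 1 := by
    rw [← Matrix.exp_add_of_commute (-D) D (Commute.neg_left (Commute.refl D)),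
      neg_add_cancel, NormedSpace.exp_zero]
  rw [Matrix.mulVec_mulVec, aux_mulVec_dot_mulVec, h1, ← mul_assoc, hcomm.eq,
    mul_assoc, hinv, mul_one]
end helpers

lemma blockDiag3_mul_blockMat3 {N : ℕ} (D : Matrix (Fin N) (Fin N) ℝ)
    (A : Fin 3 → Fin 3 → Matrix (Fin N) (Fin N) ℝ) :
    blockDiag3 D * blockMat3 A = blockMat3 (fun i j => D * A i j) := by
  ext ⟨i, a⟩ ⟨j, b⟩
  simp [Matrix.mul_apply, blockDiag3, blockMat3, Fintype.sum_prod_type,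
    ite_mul, Finset.sum_ite_eq]

lemma blockMat3_mul_blockDiag3 {N : ℕ} (D : Matrix (Fin N) (Fin N) ℝ)
    (A : Fin 3 → Fin 3 → Matrix (Fin N) (Fin N) ℝ) :
    blockMat3 A * blockDiag3 D = blockMat3 (fun i j => A i j * D) := by
  ext ⟨i, a⟩ ⟨j, b⟩
  simp [Matrix.mul_apply, blockDiag3, blockMat3, Fintype.sum_prod_type,
    mul_ite, Finset.sum_ite_eq']

lemma blockMat3_transpose {N : ℕ} (A : Fin 3 → Fin 3 → Matrix (Fin N) (Fin N) ℝ) :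
    (blockMat3 A)ᵀ = blockMat3 (fun i j => (A j i)ᵀ) := by
  ext ⟨i, a⟩ ⟨j, b⟩
  simp [blockMat3, Matrix.transpose_apply]

/-- the fully discrete exponential scheme exactly conserves the discrete energies ℰ₅ and ℰ₆: `μ⟨Hᵗ, B_k Hᵗ⟩ + ε⟨Eᵗ, B_k Eᵗ⟩` and `μ⟨Ḣᵗ, B_k Ḣᵗ⟩ + ε⟨Ėᵗ, B_k Ėᵗ⟩` are constant in `t` for each `k`. -/
theorem discrete_energy_conservation_E5_E6 {N : ℕ} (hN : 0 < N) (μ ε : ℝ) (hμ : 0 < μ) (hε : 0 < ε)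
    (D1 D2 D3 : Matrix (Fin N) (Fin N) ℝ)
    (h12 : D1 * D2 = D2 * D1) (h13 : D1 * D3 = D3 * D1) (h23 : D2 * D3 = D3 * D2)
    (hD1 : D1ᵀ = -D1) (hD2 : D2ᵀ = -D2) (hD3 : D3ᵀ = -D3)
    (𝔻 : Matrix (Fin 3 × Fin N) (Fin 3 × Fin N) ℝ)
    (h𝔻 : 𝔻 = blockMat3 ![![0, -D3, D2], ![D3, 0, -D1], ![-D2, D1, 0]])
    (𝒟 : Matrix ((Fin 3 × Fin N) ⊕ (Fin 3 × Fin N)) ((Fin 3 × Fin N) ⊕ (Fin 3 × Fin N)) ℝ)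
    (h𝒟 : 𝒟 = (Real.sqrt (μ * ε))⁻¹ • Matrix.fromBlocks 0 (-𝔻) 𝔻 0)
    (H E : ℝ → (Fin 3 × Fin N → ℝ))
    (hprop : ∀ t : ℝ,
      Sum.elim (fun i => Real.sqrt μ * H t i) (fun i => Real.sqrt ε * E t i) =
        (NormedSpace.exp (t • 𝒟)).mulVec
          (Sum.elim (fun i => Real.sqrt μ * H 0 i) (fun i => Real.sqrt ε * E 0 i)))
    (B : Fin 3 → Matrix (Fin 3 × Fin N) (Fin 3 × Fin N) ℝ)
    (hB : ∀ k : Fin 3, B k = blockDiag3 (![D1, D2, D3] k))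
    (Hdot Edot : ℝ → (Fin 3 × Fin N → ℝ))
    (hHdot : ∀ t : ℝ, Hdot t = (-(1 / μ)) • 𝔻.mulVec (E t))
    (hEdot : ∀ t : ℝ, Edot t = (1 / ε) • 𝔻.mulVec (H t)) :
    ∀ k : Fin 3, ∀ t : ℝ,
      (μ * (H t ⬝ᵥ (B k).mulVec (H t)) + ε * (E t ⬝ᵥ (B k).mulVec (E t)) =
        μ * (H 0 ⬝ᵥ (B k).mulVec (H 0)) + ε * (E 0 ⬝ᵥ (B k).mulVec (E 0))) ∧
      (μ * (Hdot t ⬝ᵥ (B k).mulVec (Hdot t)) + ε * (Edot t ⬝ᵥ (B k).mulVec (Edot t)) =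
        μ * (Hdot 0 ⬝ᵥ (B k).mulVec (Hdot 0)) + ε * (Edot 0 ⬝ᵥ (B k).mulVec (Edot 0))) := by
  have hsqμ : Real.sqrt μ * Real.sqrt μ = μ := Real.mul_self_sqrt hμ.le
  have hsqε : Real.sqrt ε * Real.sqrt ε = ε := Real.mul_self_sqrt hε.le
  have h𝔻T : 𝔻ᵀ = 𝔻 := by
    rw [h𝔻, blockMat3_transpose]
    refine congrArg blockMat3 ?_
    funext i j
    fin_cases i <;> fin_cases j <;>
      simp [hD1, hD2, hD3]
  have hBD : ∀ k : Fin 3, B k * 𝔻 = 𝔻 * B k := by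
    intro k
    rw [hB, h𝔻, blockDiag3_mul_blockMat3, blockMat3_mul_blockDiag3]
    refine congrArg blockMat3 ?_
    funext i j
    fin_cases k <;> fin_cases i <;> fin_cases j <;>
      simp [h12, h13, h23, Matrix.mul_neg, Matrix.neg_mul]
  have h𝒟T : 𝒟ᵀ = -𝒟 := by
    rw [h𝒟, Matrix.transpose_smul, Matrix.fromBlocks_transpose, h𝔻T, ← smul_neg]
    congr 1
    rw [Matrix.transpose_neg, h𝔻T]
    ext (i | i) (j | j) <;> simp [Matrix.fromBlocks]
  -- core conservation for any commuting M
  have key : ∀ (M : Matrix (Fin 3 × Fin N) (Fin 3 × Fin N) ℝ), M * 𝔻 = 𝔻 * M →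
      ∀ t : ℝ, μ * (H t ⬝ᵥ M *ᵥ H t) + ε * (E t ⬝ᵥ M *ᵥ E t)
             = μ * (H 0 ⬝ᵥ M *ᵥ H 0) + ε * (E 0 ⬝ᵥ M *ᵥ E 0) := by
    intro M hM t
    set P := Matrix.fromBlocks M 0 0 M with hP
    have hPF : P * Matrix.fromBlocks 0 (-𝔻) 𝔻 0 = Matrix.fromBlocks 0 (-𝔻) 𝔻 0 * P := by
      rw [hP]
      simp only [Matrix.fromBlocks_multiply, Matrix.mul_neg, Matrix.neg_mul, hM,
        Matrix.zero_mul, Matrix.mul_zero, add_zero, zero_add, neg_zero]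
    have hPD : Commute P (t • 𝒟) := by
      rw [h𝒟, smul_smul]
      exact (show Commute P (Matrix.fromBlocks 0 (-𝔻) 𝔻 0) from hPF).smul_right _
    have hDt : (t • 𝒟)ᵀ = -(t • 𝒟) := by rw [Matrix.transpose_smul, h𝒟T, smul_neg]
    have scale : ∀ (u v : Fin 3 × Fin N → ℝ),
        Sum.elim (fun i => Real.sqrt μ * u i) (fun i => Real.sqrt ε * v i) ⬝ᵥ
          P *ᵥ Sum.elim (fun i => Real.sqrt μ * u i) (fun i => Real.sqrt ε * v i)
        = μ * (u ⬝ᵥ M *ᵥ u) + ε * (v ⬝ᵥ M *ᵥ v) := by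
      intro u v
      have h1 : (fun i => Real.sqrt μ * u i) = Real.sqrt μ • u := rfl
      have h2 : (fun i => Real.sqrt ε * v i) = Real.sqrt ε • v := rfl
      rw [h1, h2, hP, Matrix.fromBlocks_mulVec, sumElim_dotProduct_sumElim]
      simp only [Sum.elim_comp_inl, Sum.elim_comp_inr, Matrix.zero_mulVec, add_zero,
        zero_add, Matrix.mulVec_smul, dotProduct_smul, smul_dotProduct,
        smul_eq_mul]
      simp only [smul_zero, add_zero, zero_add, dotProduct_smul,
        smul_dotProduct, smul_eq_mul]
      rw [← mul_assoc, ← mul_assoc, hsqμ, hsqε]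
    have hcons := aux_exp_conserve (t • 𝒟) P hDt hPD
        (Sum.elim (fun i => Real.sqrt μ * H 0 i) (fun i => Real.sqrt ε * E 0 i))
    rw [← hprop t, scale, scale] at hcons
    exact hcons
  intro k t
  refine ⟨key (B k) (hBD k) t, ?_⟩
  have hM' : (𝔻 * B k * 𝔻) * 𝔻 = 𝔻 * (𝔻 * B k * 𝔻) := by
    calc (𝔻 * B k * 𝔻) * 𝔻 = 𝔻 * ((B k * 𝔻) * 𝔻) := by
          rw [mul_assoc 𝔻 (B k) 𝔻, mul_assoc]
      _ = 𝔻 * ((𝔻 * B k) * 𝔻) := by rw [hBD k]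
      _ = 𝔻 * (𝔻 * B k * 𝔻) := rfl
  have h6 := key (𝔻 * B k * 𝔻) hM' t
  have conv6 : ∀ s : ℝ,
      μ * (Hdot s ⬝ᵥ (B k) *ᵥ Hdot s) + ε * (Edot s ⬝ᵥ (B k) *ᵥ Edot s)
      = (μ * ε)⁻¹ * (μ * (H s ⬝ᵥ (𝔻 * B k * 𝔻) *ᵥ H s)
          + ε * (E s ⬝ᵥ (𝔻 * B k * 𝔻) *ᵥ E s)) := by
    intro s
    rw [hHdot, hEdot]
    have hsc : ∀ (c : ℝ) (w : Fin 3 × Fin N → ℝ),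
        (c • (𝔻 *ᵥ w)) ⬝ᵥ (B k) *ᵥ (c • (𝔻 *ᵥ w))
          = c * c * (w ⬝ᵥ (𝔻 * B k * 𝔻) *ᵥ w) := by
      intro c w
      rw [Matrix.mulVec_smul, dotProduct_smul, smul_dotProduct,
        Matrix.mulVec_mulVec, aux_mulVec_dot_mulVec, h𝔻T, ← mul_assoc]
      simp [smul_eq_mul]; ring
    rw [hsc, hsc]
    field_simp
    ring
  rw [conv6 t, conv6 0, h6]
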